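/- arXiv:1709.09942 — 2 statements merged into one kernel-verified Lean document; each statement's English description precedes it below -/
import Mathlib

section
/- Let G be a group and let Σ ⊆ G be an approximate subgroup. If F ⊆ qComm_G(Σ) is a finite set containing the identity, then the enlargement Σ_F := F·Σ ∪ Σ·F⁻¹ is again an approximate subgroup of G, i.e. Σ_F is symmetric, contains the identity, and Σ_F·Σ_F ⊆ Σ_F·F' for some finite F' ⊆ G. -/
/-- A packaged locally compact second countable Hausdorff topological group,
equipped with its Borel structure. -/
structure LCSCGroupPack where
  carrier : Type
  [grp : Group carrier]
  [top : TopologicalSpace carrier]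
  [tgrp : IsTopologicalGroup carrier]
  [t2 : T2Space carrier]
  [lc : LocallyCompactSpace carrier]
  [sc : SecondCountableTopology carrier]
  [mb : MeasurableSpace carrier]
  [bs : BorelSpace carrier]

attribute [instance] LCSCGroupPack.grp LCSCGroupPack.top LCSCGroupPack.tgrp LCSCGroupPack.t2
  LCSCGroupPack.lc LCSCGroupPack.sc LCSCGroupPack.mb LCSCGroupPack.bs

open MeasureTheory Set
open scoped Pointwise ENNReal

/-- A subset of a topological group is relatively dense if finitely many "translates"
by a compact set cover the group: `A * K = G` for some compact `K`. -/
def RelativelyDense {G : Type*} [Group G] [TopologicalSpace G] (A : Set G) : Prop :=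
  ∃ K : Set G, IsCompact K ∧ A * K = Set.univ

/-- A uniform lattice: a discrete, cocompact subgroup. -/
def IsUniformLattice {G : Type*} [Group G] [TopologicalSpace G] (Γ : Subgroup G) : Prop :=
  DiscreteTopology Γ ∧ RelativelyDense (Γ : Set G)

/-- A uniform cut-and-project scheme: `Γ ≤ G × H` is a uniform lattice projecting
injectively to `G` and densely to `H`. -/
structure IsCutAndProject {G H : Type*} [Group G] [TopologicalSpace G] [Group H]
    [TopologicalSpace H] (Γ : Subgroup (G × H)) : Prop where
  lattice : IsUniformLattice Γ
  inj : ∀ x y : Γ, (x : G × H).1 = (y : G × H).1 → x = y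
  dense_proj : Dense (Prod.snd '' (Γ : Set (G × H)))

/-- The model set `Λ(G,H,Γ,W) = π_G (Γ ∩ (G × W))`. -/
def modelSet {G H : Type*} [Group G] [TopologicalSpace G] [Group H] [TopologicalSpace H]
    (Γ : Subgroup (G × H)) (W : Set H) : Set G :=
  Prod.fst '' ((Γ : Set (G × H)) ∩ (Set.univ ×ˢ W))

/-- A regular symmetric window containing the identity: compact, symmetric, `1 ∈ W`,
with dense interior, Haar-null boundary, boundary disjoint from `π_H(Γ)`, and aperiodic. -/
def IsRegularWindow {G : Type*} [Group G] [TopologicalSpace G] (H : Type*) [Group H]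
    [TopologicalSpace H] [MeasurableSpace H] (Γ : Subgroup (G × H)) (W : Set H) : Prop :=
  IsCompact W ∧ W⁻¹ = W ∧ (1 : H) ∈ W ∧ W ⊆ closure (interior W) ∧
  (∀ μH : Measure H, μH.IsHaarMeasure → μH (frontier W) = 0) ∧
  frontier W ∩ (Prod.snd '' (Γ : Set (G × H))) = ∅ ∧
  (∀ h : H, (fun w => h * w) '' W = W → h = 1)

/-- `Λ` is a symmetric Meyer set containing the identity in `G`: a relatively dense
symmetric subset containing `1` of a regular symmetric uniform model set. -/
def IsSymmetricMeyer (G : Type) [Group G] [TopologicalSpace G] (Λ : Set G) : Prop :=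
  Λ⁻¹ = Λ ∧ (1 : G) ∈ Λ ∧ RelativelyDense Λ ∧
  ∃ (H : LCSCGroupPack) (Γ : Subgroup (G × H.carrier)) (W : Set H.carrier),
    IsCutAndProject Γ ∧ IsRegularWindow H.carrier Γ W ∧ Λ ⊆ modelSet Γ W

/-- Every `L^p`-cocycle on the (abstract) group `Γ` is bounded on `A`. -/
def BddLpCocyclesOn (p : ℝ≥0∞) (hp : 1 ≤ p) (Γ : Type*) [Group Γ] (A : Set Γ) : Prop :=
  haveI : Fact (1 ≤ p) := ⟨hp⟩
  ∀ (Y : Type) [MeasurableSpace Y] [StandardBorelSpace Y] (μ : Measure Y) [SigmaFinite μ]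
    (π : Γ →* (Lp ℝ p μ ≃ₗᵢ[ℝ] Lp ℝ p μ)) (b : Γ → Lp ℝ p μ),
    (∀ g h : Γ, b (g * h) = b g + (π g) (b h)) →
    ∃ C : ℝ, ∀ x ∈ A, ‖b x‖ ≤ C

/-- Every weak `L^p`-quasi-cocycle on the (abstract) group `Γ` is bounded on `A`. -/
def WqBddOn (p : ℝ≥0∞) (hp : 1 ≤ p) (Γ : Type*) [Group Γ] (A : Set Γ) : Prop :=
  haveI : Fact (1 ≤ p) := ⟨hp⟩
  ∀ (Y : Type) [MeasurableSpace Y] [StandardBorelSpace Y] (μ : Measure Y) [SigmaFinite μ]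
    (π : Γ → (Lp ℝ p μ ≃ₗᵢ[ℝ] Lp ℝ p μ)) (b : Γ → Lp ℝ p μ),
    (∃ D : ℝ, ∀ g h : Γ, ‖b (g * h) - b g - (π g) (b h)‖ ≤ D) →
    ∃ C : ℝ, ∀ x ∈ A, ‖b x‖ ≤ C

/-- Property (FL^p) for a topological group: every continuous `L^p`-cocycle is bounded. -/
def HasFLp (p : ℝ≥0∞) (hp : 1 ≤ p) (G : Type*) [Group G] [TopologicalSpace G] : Prop :=
  haveI : Fact (1 ≤ p) := ⟨hp⟩
  ∀ (Y : Type) [MeasurableSpace Y] [StandardBorelSpace Y] (μ : Measure Y) [SigmaFinite μ]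
    (π : G →* (Lp ℝ p μ ≃ₗᵢ[ℝ] Lp ℝ p μ)) (b : G → Lp ℝ p μ),
    (∀ g h : G, b (g * h) = b g + (π g) (b h)) →
    Continuous b → (∀ v, Continuous fun g => (π g) v) →
    ∃ C : ℝ, ∀ g : G, ‖b g‖ ≤ C

/-- Property (FFFL^p): every Borel weak `L^p`-quasi-cocycle is bounded. -/
def HasFFFLp (p : ℝ≥0∞) (hp : 1 ≤ p) (G : Type*) [Group G] [TopologicalSpace G]
    [MeasurableSpace G] : Prop :=
  haveI : Fact (1 ≤ p) := ⟨hp⟩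
  ∀ (Y : Type) [MeasurableSpace Y] [StandardBorelSpace Y] (μ : Measure Y) [SigmaFinite μ]
    (π : G → (Lp ℝ p μ ≃ₗᵢ[ℝ] Lp ℝ p μ)) (b : G → Lp ℝ p μ),
    (∃ D : ℝ, ∀ g h : G, ‖b (g * h) - b g - (π g) (b h)‖ ≤ D) →
    (∀ U : Set (Lp ℝ p μ), IsOpen U → MeasurableSet (b ⁻¹' U)) →
    (∀ (v : Lp ℝ p μ) (U : Set (Lp ℝ p μ)), IsOpen U →
      MeasurableSet ((fun g => (π g) v) ⁻¹' U)) →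
    ∃ C : ℝ, ∀ g : G, ‖b g‖ ≤ C

/-- a-FL^p-menability of a topological group: there is a continuous `L^p`-cocycle
all of whose sublevel sets have compact closure. -/
def AFLpMenable (p : ℝ≥0∞) (hp : 1 ≤ p) (G : Type*) [Group G] [TopologicalSpace G] : Prop :=
  haveI : Fact (1 ≤ p) := ⟨hp⟩
  ∃ (Y : Type) (mY : MeasurableSpace Y) (μ : @Measure Y mY),
    @StandardBorelSpace Y mY ∧ SigmaFinite μ ∧
    ∃ (π : G →* (Lp ℝ p μ ≃ₗᵢ[ℝ] Lp ℝ p μ)) (b : G → Lp ℝ p μ),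
      (∀ g h : G, b (g * h) = b g + (π g) (b h)) ∧
      Continuous b ∧ (∀ v, Continuous fun g => (π g) v) ∧
      ∀ C : ℝ, IsCompact (closure {g : G | ‖b g‖ ≤ C})

/-- a-FFFL^p-menability of a topological group: there is a Borel weak `L^p`-quasi-cocycle
all of whose sublevel sets have compact closure. -/
def AFFFLpMenable (p : ℝ≥0∞) (hp : 1 ≤ p) (G : Type*) [Group G] [TopologicalSpace G]
    [MeasurableSpace G] : Prop :=
  haveI : Fact (1 ≤ p) := ⟨hp⟩
  ∃ (Y : Type) (mY : MeasurableSpace Y) (μ : @Measure Y mY),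
    @StandardBorelSpace Y mY ∧ SigmaFinite μ ∧
    ∃ (π : G → (Lp ℝ p μ ≃ₗᵢ[ℝ] Lp ℝ p μ)) (b : G → Lp ℝ p μ),
      (∃ D : ℝ, ∀ g h : G, ‖b (g * h) - b g - (π g) (b h)‖ ≤ D) ∧
      (∀ U : Set (Lp ℝ p μ), IsOpen U → MeasurableSet (b ⁻¹' U)) ∧
      (∀ (v : Lp ℝ p μ) (U : Set (Lp ℝ p μ)), IsOpen U →
        MeasurableSet ((fun g => (π g) v) ⁻¹' U)) ∧
      ∀ C : ℝ, IsCompact (closure {g : G | ‖b g‖ ≤ C})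

/-- There is an `L^p`-cocycle on the subgroup generated by `Λ` whose sublevel sets
along `Λ` have compact closure in `G`. -/
def ExistsLpCocycleProperOnSubset (p : ℝ≥0∞) (hp : 1 ≤ p) {G : Type*} [Group G]
    [TopologicalSpace G] (Λ : Set G) : Prop :=
  haveI : Fact (1 ≤ p) := ⟨hp⟩
  ∃ (Y : Type) (mY : MeasurableSpace Y) (μ : @Measure Y mY),
    @StandardBorelSpace Y mY ∧ SigmaFinite μ ∧
    ∃ (π : ↥(Subgroup.closure Λ) →* (Lp ℝ p μ ≃ₗᵢ[ℝ] Lp ℝ p μ))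
      (b : ↥(Subgroup.closure Λ) → Lp ℝ p μ),
      (∀ g h : ↥(Subgroup.closure Λ), b (g * h) = b g + (π g) (b h)) ∧
      ∀ C : ℝ, IsCompact (closure (Subtype.val ''
        {x : ↥(Subgroup.closure Λ) | (x : G) ∈ Λ ∧ ‖b x‖ ≤ C}))

/-- There is a weak `L^p`-quasi-cocycle on the subgroup generated by `Λ` whose sublevel
sets along `Λ` have compact closure in `G`. -/
def ExistsWqCocycleProperOnSubset (p : ℝ≥0∞) (hp : 1 ≤ p) {G : Type*} [Group G]
    [TopologicalSpace G] (Λ : Set G) : Prop :=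
  haveI : Fact (1 ≤ p) := ⟨hp⟩
  ∃ (Y : Type) (mY : MeasurableSpace Y) (μ : @Measure Y mY),
    @StandardBorelSpace Y mY ∧ SigmaFinite μ ∧
    ∃ (π : ↥(Subgroup.closure Λ) → (Lp ℝ p μ ≃ₗᵢ[ℝ] Lp ℝ p μ))
      (b : ↥(Subgroup.closure Λ) → Lp ℝ p μ),
      (∃ D : ℝ, ∀ g h : ↥(Subgroup.closure Λ), ‖b (g * h) - b g - (π g) (b h)‖ ≤ D) ∧
      ∀ C : ℝ, IsCompact (closure (Subtype.val ''
        {x : ↥(Subgroup.closure Λ) | (x : G) ∈ Λ ∧ ‖b x‖ ≤ C}))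

/-- There is an `L^p`-cocycle on `Δ` which is proper on `A` in the discrete sense:
all sublevel sets along `A` are finite. -/
def ExistsLpCocycleFinProperOn (p : ℝ≥0∞) (hp : 1 ≤ p) (Δ : Type*) [Group Δ]
    (A : Set Δ) : Prop :=
  haveI : Fact (1 ≤ p) := ⟨hp⟩
  ∃ (Y : Type) (mY : MeasurableSpace Y) (μ : @Measure Y mY),
    @StandardBorelSpace Y mY ∧ SigmaFinite μ ∧
    ∃ (π : Δ →* (Lp ℝ p μ ≃ₗᵢ[ℝ] Lp ℝ p μ)) (b : Δ → Lp ℝ p μ),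
      (∀ g h : Δ, b (g * h) = b g + (π g) (b h)) ∧
      ∀ C : ℝ, 0 < C → {x ∈ A | ‖b x‖ ≤ C}.Finite

/-- There is a weak `L^p`-quasi-cocycle on `Δ` which is proper on `A` in the discrete
sense: all sublevel sets along `A` are finite. -/
def ExistsWqCocycleFinProperOn (p : ℝ≥0∞) (hp : 1 ≤ p) (Δ : Type*) [Group Δ]
    (A : Set Δ) : Prop :=
  haveI : Fact (1 ≤ p) := ⟨hp⟩
  ∃ (Y : Type) (mY : MeasurableSpace Y) (μ : @Measure Y mY),
    @StandardBorelSpace Y mY ∧ SigmaFinite μ ∧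
    ∃ (π : Δ → (Lp ℝ p μ ≃ₗᵢ[ℝ] Lp ℝ p μ)) (b : Δ → Lp ℝ p μ),
      (∃ D : ℝ, ∀ g h : Δ, ‖b (g * h) - b g - (π g) (b h)‖ ≤ D) ∧
      ∀ C : ℝ, 0 < C → {x ∈ A | ‖b x‖ ≤ C}.Finite

/-- Property (FFFFL^p): every 2-Freiman weak `L^p`-quasi-cocycle (defect bounded over
`Λ`) is bounded on `Λ`. -/
def Freiman2BddOn (p : ℝ≥0∞) (hp : 1 ≤ p) (Γ : Type*) [Group Γ] (Λ : Set Γ) : Prop :=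
  haveI : Fact (1 ≤ p) := ⟨hp⟩
  ∀ (Y : Type) [MeasurableSpace Y] [StandardBorelSpace Y] (μ : Measure Y) [SigmaFinite μ]
    (π : Γ → (Lp ℝ p μ ≃ₗᵢ[ℝ] Lp ℝ p μ)) (b : Γ → Lp ℝ p μ),
    (∃ D : ℝ, ∀ g ∈ Λ, ∀ h ∈ Λ, ‖b (g * h) - b g - (π g) (b h)‖ ≤ D) →
    ∃ C : ℝ, ∀ x ∈ Λ, ‖b x‖ ≤ C

/-- a-FFFFL^p-menability: there is a 2-Freiman weak `L^p`-quasi-cocycle (defect bounded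
over `A`) which is proper on `A` in the discrete sense. -/
def Freiman2FinProperOn (p : ℝ≥0∞) (hp : 1 ≤ p) (Δ : Type*) [Group Δ] (A : Set Δ) : Prop :=
  haveI : Fact (1 ≤ p) := ⟨hp⟩
  ∃ (Y : Type) (mY : MeasurableSpace Y) (μ : @Measure Y mY),
    @StandardBorelSpace Y mY ∧ SigmaFinite μ ∧
    ∃ (π : Δ → (Lp ℝ p μ ≃ₗᵢ[ℝ] Lp ℝ p μ)) (b : Δ → Lp ℝ p μ),
      (∃ D : ℝ, ∀ g ∈ A, ∀ h ∈ A, ‖b (g * h) - b g - (π g) (b h)‖ ≤ D) ∧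
      ∀ C : ℝ, 0 < C → {x ∈ A | ‖b x‖ ≤ C}.Finite

/-- The enlargement `Σ_F = F·Σ ∪ Σ·F⁻¹` of an approximate subgroup `Σ`
by a finite set `F ∋ 1` of quasi-commensurating elements is again an approximate
subgroup. -/
theorem enlargement_is_approximate_subgroup
    (G : Type) [Group G] (S : Set G) (hsym : S⁻¹ = S) (h1 : (1 : G) ∈ S)
    (hap : ∃ F₀ : Set G, F₀.Finite ∧ S * S ⊆ S * F₀)
    (F : Set G) (hF : F.Finite) (hF1 : (1 : G) ∈ F)
    (hqc : ∀ a ∈ F, ∃ Fa : Set G, Fa.Finite ∧ {a} * S ⊆ S * Fa ∧ S * {a} ⊆ Fa * S) :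
    (F * S ∪ S * F⁻¹)⁻¹ = F * S ∪ S * F⁻¹ ∧ (1 : G) ∈ F * S ∪ S * F⁻¹ ∧
    ∃ F' : Set G, F'.Finite ∧
      (F * S ∪ S * F⁻¹) * (F * S ∪ S * F⁻¹) ⊆ (F * S ∪ S * F⁻¹) * F' := by
  obtain ⟨F₀, hF₀fin, hF₀⟩ := hap
  choose! Fa hFafin hFa1 hFa2 using hqc
  set E : Set G := F⁻¹ ∪ ⋃ a ∈ F, Fa a with hE
  have hEfin : E.Finite := hF.inv.union (hF.biUnion fun a ha => hFafin a ha)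
  set E' : Set G := {1} ∪ ⋃ a ∈ F, (Fa a)⁻¹ with hE'
  have hE'fin : E'.Finite :=
    (Set.finite_singleton 1).union (hF.biUnion fun a ha => (hFafin a ha).inv)
  have keyA : ∀ t ∈ F * S ∪ S * F⁻¹, ∃ s ∈ S, ∃ e ∈ E, s * e = t := by
    rintro t (ht | ht)
    · obtain ⟨f, hf, s, hs, rfl⟩ := Set.mem_mul.mp ht
      have h2 : f * s ∈ S * Fa f := hFa1 f hf (Set.mem_mul.mpr ⟨f, rfl, s, hs, rfl⟩)
      obtain ⟨s₁, hs₁, e, he, h⟩ := Set.mem_mul.mp h2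
      exact ⟨s₁, hs₁, e, Or.inr (Set.mem_biUnion hf he), h⟩
    · obtain ⟨s, hs, g, hg, rfl⟩ := Set.mem_mul.mp ht
      exact ⟨s, hs, g, Or.inl hg, rfl⟩
  have keyB : ∀ f ∈ F, ∀ s' ∈ S, ∃ s₃ ∈ S, ∃ w ∈ Fa f, f⁻¹ * s' = s₃ * w⁻¹ := by
    intro f hf s' hs'
    have hsinv : s'⁻¹ ∈ S := by rw [← hsym]; exact Set.inv_mem_inv.mpr hs'
    have h2 : s'⁻¹ * f ∈ Fa f * S :=
      hFa2 f hf (Set.mem_mul.mpr ⟨s'⁻¹, hsinv, f, rfl, rfl⟩)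
    obtain ⟨w, hw, s₂, hs₂, h⟩ := Set.mem_mul.mp h2
    refine ⟨s₂⁻¹, by rw [← hsym]; exact Set.inv_mem_inv.mpr hs₂, w, hw, ?_⟩
    have := congrArg (fun x => x⁻¹) h
    simp only [mul_inv_rev, inv_inv] at this
    exact this.symm
  refine ⟨?_, Or.inl (Set.mem_mul.mpr ⟨1, hF1, 1, h1, mul_one 1⟩),
    F₀ * E' * E, (hF₀fin.mul hE'fin).mul hEfin, ?_⟩
  · rw [Set.union_inv, mul_inv_rev, mul_inv_rev, inv_inv, hsym, Set.union_comm]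
  · rintro z hz
    obtain ⟨x, hx, y, hy, rfl⟩ := Set.mem_mul.mp hz
    obtain ⟨s', hs', e, he, rfl⟩ := keyA y hy
    rcases hx with hx | hx
    · obtain ⟨f, hf, s, hs, rfl⟩ := Set.mem_mul.mp hx
      obtain ⟨s₂, hs₂, y₀, hy₀, hss'⟩ := Set.mem_mul.mp (hF₀ (Set.mul_mem_mul hs hs'))
      refine Set.mem_mul.mpr ⟨f * s₂, Or.inl (Set.mul_mem_mul hf hs₂),
        y₀ * 1 * e, ?_, ?_⟩
      · exact Set.mul_mem_mul (Set.mul_mem_mul hy₀ (Or.inl rfl)) he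
      · calc f * s₂ * (y₀ * 1 * e) = f * (s₂ * y₀) * e := by group
          _ = f * (s * s') * e := by rw [hss']
          _ = f * s * (s' * e) := by group
    · obtain ⟨s, hs, g, hg, rfl⟩ := Set.mem_mul.mp hx
      have hf : g⁻¹ ∈ F := hg
      obtain ⟨s₃, hs₃, w, hw, hB⟩ := keyB g⁻¹ hf s' hs'
      obtain ⟨s₄, hs₄, y₀, hy₀, hss₃⟩ := Set.mem_mul.mp (hF₀ (Set.mul_mem_mul hs hs₃))
      refine Set.mem_mul.mpr ⟨1 * s₄, Or.inl (Set.mul_mem_mul hF1 hs₄),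
        y₀ * w⁻¹ * e, ?_, ?_⟩
      · refine Set.mul_mem_mul (Set.mul_mem_mul hy₀ ?_) he
        exact Or.inr (Set.mem_biUnion hf (Set.inv_mem_inv.mpr hw))
      · calc 1 * s₄ * (y₀ * w⁻¹ * e) = s₄ * y₀ * w⁻¹ * e := by group
          _ = s * s₃ * w⁻¹ * e := by rw [hss₃]
          _ = s * (s₃ * w⁻¹) * e := by group
          _ = s * (g⁻¹⁻¹ * s') * e := by rw [← hB]
          _ = s * g * (s' * e) := by group
end

section
/- Let 1 < p < ∞, let (G, H, Γ) be a uniform cut-and-project scheme with H almost connected, let W ⊆ H be a regular symmetric window containing 1, and let Λ = Λ(G,H,Γ,W) be the associated regular symmetric uniform model set. Let Δ ⊆ Λ be a symmetric subset containing 1 which is relatively dense in G, and let Λ^∞ and Δ^∞ be the subgroups of G generated by Λ and Δ respectively. If every L^p-cocycle (π, b) on Λ^∞ has b bounded on Λ, then every L^p-cocycle (π, b) on Δ^∞ has b bounded on Δ. -/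
open MeasureTheory Set
open scoped Pointwise ENNReal

/-! ### Auxiliary lemmas -/

theorem aux_transversal {G H : Type} [Group G] [TopologicalSpace G] [IsTopologicalGroup G]
    [T2Space G] [LocallyCompactSpace G] [SecondCountableTopology G]
    [Group H] [TopologicalSpace H] [IsTopologicalGroup H] [T2Space H]
    [LocallyCompactSpace H] [SecondCountableTopology H]
    (hH : CompactSpace (ConnectedComponents H))
    (Γ : Subgroup (G × H)) [DiscreteTopology Γ]
    (hdense : Dense (Prod.snd '' (Γ : Set (G × H))))
    (W : Set H) (hWc : IsCompact W)
    (Δ Λ : Set G)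
    (hΔgr : ∀ δ ∈ Δ, ∃ γ ∈ Γ, (γ : G × H).1 = δ ∧ (γ : G × H).2 ∈ W)
    (hΛgr : ∀ l ∈ Λ, ∃ γ ∈ Γ, (γ : G × H).1 = l)
    (hΔΛ : Δ ⊆ Λ)
    (K : Set G) (hK : IsCompact K) (hΔK : Δ * K = univ) :
    ∃ T : Set G, T.Finite ∧ ∀ x ∈ Subgroup.closure Λ,
      ∃ t ∈ T, t ∈ Subgroup.closure Λ ∧ t⁻¹ * x ∈ Subgroup.closure Δ := by
  classical
  set DG : Subgroup G := Subgroup.closure Δ with hDGdef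
  set LG : Subgroup G := Subgroup.closure Λ with hLGdef
  set 𝔻 : Subgroup (G × H) := Γ ⊓ Subgroup.comap (MonoidHom.fst G H) DG with h𝔻def
  set 𝕃 : Subgroup (G × H) := Γ ⊓ Subgroup.comap (MonoidHom.fst G H) LG with h𝕃def
  have h𝔻𝕃 : 𝔻 ≤ 𝕃 := inf_le_inf le_rfl (Subgroup.comap_mono (Subgroup.closure_mono hΔΛ))
  set HD : Subgroup H := (𝔻.map (MonoidHom.snd G H)).topologicalClosure with hHDdef
  have hHDclosed : IsClosed (HD : Set H) := Subgroup.isClosed_topologicalClosure _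
  have hΓclosed : IsClosed (Γ : Set (G × H)) := Subgroup.isClosed_of_discrete
  have hΓcount : Countable Γ :=
    TopologicalSpace.separableSpace_iff_countable.mp inferInstance
  -- graphs of Δ elements are in 𝔻 with second coordinate in W
  have hΔ𝔻 : ∀ δ ∈ Δ, ∃ d ∈ 𝔻, (d : G × H).1 = δ ∧ (d : G × H).2 ∈ W := by
    intro δ hδ
    obtain ⟨γ, hγΓ, hγ1, hγ2⟩ := hΔgr δ hδ
    exact ⟨γ, ⟨hγΓ, by simp [Subgroup.mem_comap, hγ1, hDGdef, Subgroup.subset_closure hδ]⟩, hγ1, hγ2⟩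
  -- snd of 𝔻 elements is in HD
  have h𝔻HD : ∀ d ∈ 𝔻, (d : G × H).2 ∈ HD := fun d hd =>
    (𝔻.map (MonoidHom.snd G H)).le_topologicalClosure ⟨d, hd, rfl⟩
  -- Step 1 : relative density of 𝔻 in G × HD
  obtain ⟨V₀, hV₀c, hV₀n⟩ := exists_compact_mem_nhds (1 : H)
  set K₁ : Set (G × H) := K ×ˢ ((W⁻¹ * V₀) ∩ HD) with hK₁def
  have hK₁c : IsCompact K₁ := hK.prod (((hWc.inv).mul hV₀c).inter_right hHDclosed)
  have hK₁HD : ∀ k ∈ K₁, k.2 ∈ HD := fun k hk => (mem_prod.mp hk).2.2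
  have hreldense : ∀ z : G × H, z.2 ∈ HD → ∃ d ∈ (𝔻 : Set (G × H)), d⁻¹ * z ∈ K₁ := by
    rintro ⟨g, h⟩ hh
    -- find d₁ ∈ 𝔻 with snd close to h
    set e : H ≃ₜ H := (Homeomorph.inv H).trans (Homeomorph.mulLeft h) with hedef
    have hopen : IsOpen (e '' interior V₀) := e.isOpen_image.mpr isOpen_interior
    have hmem : h ∈ e '' interior V₀ :=
      ⟨1, mem_interior_iff_mem_nhds.2 hV₀n, by simp [hedef]⟩
    have hcl : h ∈ closure ((𝔻.map (MonoidHom.snd G H)) : Set H) := hh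
    obtain ⟨y, hyU, hyS⟩ := mem_closure_iff.mp hcl _ hopen hmem
    obtain ⟨v, hv, hyv⟩ := hyU
    obtain ⟨d₁, hd₁𝔻, hd₁y⟩ := hyS
    have hy2 : d₁.2 = y := hd₁y
    have hyv' : h * v⁻¹ = y := hyv
    have ha : d₁.2⁻¹ * h = v := by rw [hy2, ← hyv']; group
    obtain ⟨δ₂, hδ₂, k, hkK, hak⟩ : ∃ δ₂ ∈ Δ, ∃ k ∈ K, d₁.1⁻¹ * g = δ₂ * k := by
      have hm : d₁.1⁻¹ * g ∈ Δ * K := by rw [hΔK]; trivial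
      obtain ⟨δ₂, hδ₂, k, hkK, h'⟩ := hm
      exact ⟨δ₂, hδ₂, k, hkK, h'.symm⟩
    obtain ⟨d₂, hd₂𝔻, hd₂1, hd₂2⟩ := hΔ𝔻 δ₂ hδ₂
    refine ⟨d₁ * d₂, mul_mem hd₁𝔻 hd₂𝔻, ?_⟩
    have hprod : (d₁ * d₂)⁻¹ * (g, h) = (d₂.1⁻¹ * (d₁.1⁻¹ * g), d₂.2⁻¹ * (d₁.2⁻¹ * h)) := by
      simp [Prod.ext_iff, mul_assoc]
    rw [hprod, hK₁def]
    have h1 : d₂.1⁻¹ * (d₁.1⁻¹ * g) ∈ K := by rw [hd₂1, hak]; simpa using hkK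
    have h2 : d₂.2⁻¹ * (d₁.2⁻¹ * h) ∈ (W⁻¹ * V₀) ∩ HD := by
      constructor
      · rw [ha]
        exact Set.mul_mem_mul (Set.inv_mem_inv.mpr hd₂2) (interior_subset hv)
      · exact mul_mem (inv_mem (h𝔻HD _ hd₂𝔻)) (mul_mem (inv_mem (h𝔻HD _ hd₁𝔻)) hh)
    exact Set.mem_prod.mpr ⟨h1, h2⟩
  -- Step 2 : Γ * K₁ = univ
  have hΓK₁closed : IsClosed ((Γ : Set (G × H)) * K₁) := hΓclosed.mul_right_of_isCompact hK₁c
  have hsub : (univ : Set G) ×ˢ (Prod.snd '' (Γ : Set (G × H))) ⊆ (Γ : Set (G × H)) * K₁ := by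
    rintro ⟨g, h⟩ ⟨-, γ, hγΓ, rfl⟩
    obtain ⟨d, hd𝔻, hdk⟩ := hreldense (γ.1⁻¹ * g, 1) (one_mem HD)
    refine ⟨γ * d, mul_mem hγΓ ((inf_le_left : 𝔻 ≤ Γ) hd𝔻), d⁻¹ * (γ.1⁻¹ * g, 1), hdk, ?_⟩
    simp [Prod.ext_iff, ← mul_assoc]
  have huniv : (Γ : Set (G × H)) * K₁ = univ := by
    apply eq_univ_of_univ_subset
    have hdp : closure ((univ : Set G) ×ˢ (Prod.snd '' (Γ : Set (G × H)))) = univ := by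
      rw [closure_prod_eq]
      rw [hdense.closure_eq]
      simp
    calc univ = closure ((univ : Set G) ×ˢ (Prod.snd '' (Γ : Set (G × H)))) := hdp.symm
      _ ⊆ closure ((Γ : Set (G × H)) * K₁) := closure_mono hsub
      _ = (Γ : Set (G × H)) * K₁ := hΓK₁closed.closure_eq
  -- Step 3 : H is covered by countably many left cosets of HD
  have hcover : ∀ h : H, ∃ γ : Γ, h ∈ (γ : G × H).2 • (HD : Set H) := by
    intro h
    have : ((1 : G), h) ∈ (Γ : Set (G × H)) * K₁ := by rw [huniv]; trivial
    obtain ⟨γ, hγΓ, k, hkK₁, heq⟩ := this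
    refine ⟨⟨γ, hγΓ⟩, k.2, hK₁HD k hkK₁, ?_⟩
    have := congrArg Prod.snd heq
    simpa using this
  -- Step 4 : Baire gives openness of HD
  have hHDopen : IsOpen (HD : Set H) := by
    obtain ⟨γ₀, hγ₀⟩ : ∃ γ : Γ, (interior ((γ : G × H).2 • (HD : Set H))).Nonempty := by
      apply nonempty_interior_of_iUnion_of_closed
        (f := fun γ : Γ => ((γ : G × H).2 • (HD : Set H)))
      · exact fun γ => hHDclosed.smul _
      · exact eq_univ_of_forall fun h => mem_iUnion.mpr (hcover h)
    rw [interior_smul] at hγ₀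
    obtain ⟨x, hx⟩ := smul_set_nonempty.mp hγ₀
    exact Subgroup.isOpen_of_mem_nhds HD (mem_interior_iff_mem_nhds.mp hx)
  have hHDclopen : IsClopen (HD : Set H) := ⟨hHDclosed, hHDopen⟩
  -- Step 5 : finitely many cosets of HD cover H
  obtain ⟨t, ht⟩ : ∃ t : Finset H, ∀ h : H, ∃ g ∈ t, h ∈ g • (HD : Set H) := by
    set q : H → ConnectedComponents H := ConnectedComponents.mk with hqdef
    have hclopen : ∀ g : H, IsClopen (g • (HD : Set H)) :=
      fun g => ⟨hHDclosed.smul g, hHDopen.smul g⟩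
    have hsat : ∀ g : H, q ⁻¹' (q '' (g • (HD : Set H))) = g • (HD : Set H) := by
      intro g
      refine Subset.antisymm ?_ (subset_preimage_image _ _)
      rintro y ⟨z, hz, hqz⟩
      have hcc : connectedComponent z = connectedComponent y :=
        ConnectedComponents.coe_eq_coe.mp hqz
      have hyc : y ∈ connectedComponent z := hcc ▸ mem_connectedComponent
      exact isPreconnected_connectedComponent.subset_isClopen (hclopen g)
        ⟨z, mem_connectedComponent, hz⟩ hyc
    have hopen' : ∀ g : H, IsOpen (q '' (g • (HD : Set H))) := by
      intro g
      rw [← ConnectedComponents.isQuotientMap_coe.isOpen_preimage]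
      rw [hsat g]
      exact (hclopen g).2
    have hcov : (univ : Set (ConnectedComponents H)) ⊆ ⋃ g : H, q '' (g • (HD : Set H)) := by
      rintro c -
      obtain ⟨h, rfl⟩ := ConnectedComponents.surjective_coe c
      exact mem_iUnion.mpr ⟨h, ⟨h, ⟨1, one_mem HD, mul_one h⟩, rfl⟩⟩
    obtain ⟨t, ht⟩ := isCompact_univ.elim_finite_subcover _ hopen' hcov
    refine ⟨t, fun h => ?_⟩
    obtain ⟨g, hgt, hmem⟩ := mem_iUnion₂.mp (ht (mem_univ (q h)))
    exact ⟨g, hgt, by rw [← hsat g]; exact hmem⟩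
  -- Step 6 : the finite fundamental set
  haveI hdiscΓset : DiscreteTopology (Γ : Set (G × H)) := ‹DiscreteTopology Γ›
  have hF₀fin : ((Γ : Set (G × H)) ∩ K₁).Finite := by
    haveI := DiscreteTopology.of_subset hdiscΓset (inter_subset_left :
      (Γ : Set (G × H)) ∩ K₁ ⊆ (Γ : Set (G × H)))
    exact (hK₁c.inter_left hΓclosed).finite (isDiscrete_iff_discreteTopology.mpr this)
  set F₀ : Set (G × H) := (Γ : Set (G × H)) ∩ K₁ with hF₀def
  have hstep0 : ∀ m ∈ 𝕃, m.2 ∈ HD → ∃ d ∈ (𝔻 : Set (G × H)), d⁻¹ * m ∈ F₀ := by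
    intro m hm hm2
    obtain ⟨d, hd, hk⟩ := hreldense m hm2
    exact ⟨d, hd, mul_mem (inv_mem ((inf_le_left : 𝔻 ≤ Γ) hd)) ((inf_le_left : 𝕃 ≤ Γ) hm), hk⟩
  have hr : ∀ l : G × H, ∃ g ∈ t, ∃ hd ∈ HD, l.2 = hd * g⁻¹ := by
    intro l
    obtain ⟨g, hgt, hmem⟩ := ht (l.2)⁻¹
    obtain ⟨hd, hhd, heq⟩ := hmem
    simp only [smul_eq_mul] at heq
    refine ⟨g, hgt, hd⁻¹, inv_mem hhd, ?_⟩
    rw [← inv_inv l.2, ← heq]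
    group
  have key : ∃ T₂ : Set (G × H), T₂.Finite ∧
      ∀ l ∈ (𝕃 : Set (G × H)), ∃ d ∈ (𝔻 : Set (G × H)), ∃ s ∈ T₂, l = d * s := by
    set rset : H → Set (G × H) :=
      fun g => {l | l ∈ 𝕃 ∧ ∃ hd ∈ HD, l.2 = hd * g⁻¹} with hrsetdef
    set r : H → G × H := fun g => if hg : (rset g).Nonempty then hg.some else 1 with hrdef
    refine ⟨⋃ g ∈ t, (fun f => f * r g) '' F₀, ?_, ?_⟩
    · exact (t.finite_toSet).biUnion fun g _ => hF₀fin.image _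
    · intro l hl
      obtain ⟨g, hgt, hd, hhd, heq⟩ := hr l
      have hlrset : l ∈ rset g := ⟨hl, hd, hhd, heq⟩
      have hne : (rset g).Nonempty := ⟨l, hlrset⟩
      have hrg : r g ∈ rset g := by rw [hrdef]; simp only [hne, dif_pos]; exact hne.some_mem
      obtain ⟨hrg𝕃, hd', hhd', heq'⟩ := hrg
      have hm𝕃 : l * (r g)⁻¹ ∈ 𝕃 := mul_mem hl (inv_mem hrg𝕃)
      have hm2 : (l * (r g)⁻¹).2 ∈ HD := by
        have hx2 : (l * (r g)⁻¹).2 = hd * hd'⁻¹ := by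
          simp only [Prod.snd_mul, Prod.snd_inv, heq, heq']
          group
        rw [hx2]; exact mul_mem hhd (inv_mem hhd')
      obtain ⟨d, hd𝔻, hdF₀⟩ := hstep0 _ hm𝕃 hm2
      refine ⟨d, hd𝔻, d⁻¹ * (l * (r g)⁻¹) * r g, ?_, by group⟩
      exact mem_biUnion hgt ⟨d⁻¹ * (l * (r g)⁻¹), hdF₀, rfl⟩
  obtain ⟨T₂, hT₂fin, hT₂⟩ := key
  refine ⟨(fun z : G × H => z.1⁻¹) '' T₂, hT₂fin.image _, ?_⟩
  intro x hx
  have hxmap : x ∈ Subgroup.map (MonoidHom.fst G H) Γ := by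
    refine (Subgroup.closure_le _ |>.mpr ?_ : LG ≤ Subgroup.map (MonoidHom.fst G H) Γ) hx
    intro l hl
    obtain ⟨γ, hγΓ, hγ1⟩ := hΛgr l hl
    exact ⟨γ, hγΓ, hγ1⟩
  obtain ⟨γ, hγΓ, hγ1⟩ := hxmap
  have hγ𝕃 : γ ∈ 𝕃 := ⟨hγΓ, by simpa [Subgroup.mem_comap] using (hγ1 ▸ hx :)⟩
  obtain ⟨d, hd𝔻, s, hsT₂, heq⟩ := hT₂ γ⁻¹ (inv_mem hγ𝕃)
  have hseq : s = d⁻¹ * γ⁻¹ := by rw [heq]; group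
  have hs𝕃 : s ∈ 𝕃 := by
    rw [hseq]; exact mul_mem (inv_mem (h𝔻𝕃 hd𝔻)) (inv_mem hγ𝕃)
  refine ⟨s.1⁻¹, ⟨s, hsT₂, rfl⟩, inv_mem hs𝕃.2, ?_⟩
  have hfin : (s.1⁻¹)⁻¹ * x = d.1⁻¹ := by
    have : γ = s⁻¹ * d⁻¹ := by rw [hseq]; group
    rw [← hγ1, this]
    simp [mul_assoc]
  rw [hfin]
  exact inv_mem hd𝔻.2

theorem aux_pi_iso (p : ℝ≥0∞) [Fact (1 ≤ p)] (hptop : p ≠ ⊤)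
    (X : Type) [Fintype X] [MeasurableSpace X] [MeasurableSingletonClass X]
    (Y : Type) [MeasurableSpace Y] (μ : Measure Y) [SigmaFinite μ] :
    Nonempty ((PiLp p (fun _ : X => Lp ℝ p μ)) ≃ₗᵢ[ℝ]
      Lp ℝ p ((Measure.count : Measure X).prod μ)) := by
  classical
  have hp1 : (1 : ℝ≥0∞) ≤ p := Fact.out
  have hp0 : p ≠ 0 := (one_pos.trans_le hp1).ne'
  have hpt : 0 < p.toReal := ENNReal.toReal_pos hp0 hptop
  set ν : Measure (X × Y) := (Measure.count : Measure X).prod μ with hνdef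
  have hXm : ∀ s : Set X, MeasurableSet s := fun s => s.to_countable.measurableSet
  -- snd is quasi measure preserving
  have hsndq : Measure.QuasiMeasurePreserving (Prod.snd : X × Y → Y) ν μ := by
    refine ⟨measurable_snd, ?_⟩
    rw [hνdef, Measure.map_snd_prod]
    exact Measure.AbsolutelyContinuous.mk fun s _ h0 => by simp [Measure.smul_apply, h0]
  -- glue a.e. properties over the fibers
  have hglue : ∀ Pr : X × Y → Prop, (∀ x : X, ∀ᵐ y ∂μ, Pr (x, y)) → ∀ᵐ z ∂ν, Pr z := by
    intro Pr hPr
    have hsub : {z : X × Y | ¬ Pr z} ⊆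
        ⋃ x : X, {x} ×ˢ (toMeasurable μ {y : Y | ¬ Pr (x, y)}) := by
      rintro ⟨x, y⟩ hz
      exact mem_iUnion.mpr ⟨x, by
        exact ⟨rfl, subset_toMeasurable μ {y : Y | ¬ Pr (x, y)} hz⟩⟩
    refine measure_mono_null hsub ?_
    refine le_antisymm ?_ (zero_le)
    calc ν (⋃ x : X, {x} ×ˢ (toMeasurable μ {y : Y | ¬ Pr (x, y)}))
        ≤ ∑' x : X, ν ({x} ×ˢ (toMeasurable μ {y : Y | ¬ Pr (x, y)})) := measure_iUnion_le _
      _ = 0 := by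
          rw [tsum_fintype]
          apply Finset.sum_eq_zero
          intro x _
          rw [hνdef, Measure.prod_prod, Measure.count_singleton,
            measure_toMeasurable, (ae_iff.mp (hPr x) :), mul_zero]
  -- the underlying function of the image
  set F : (PiLp p (fun _ : X => Lp ℝ p μ)) → X × Y → ℝ :=
    fun u z => (u z.1 : Y → ℝ) z.2 with hFdef
  have hFdecomp : ∀ u, F u = fun z => ∑ x : X,
      Set.indicator ({x} ×ˢ (univ : Set Y)) (fun w => (u x : Y → ℝ) w.2) z := by
    intro u
    funext z
    rw [Finset.sum_eq_single z.1]
    · simp [Set.indicator_apply, hFdef]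
    · intro x _ hx
      apply Set.indicator_of_notMem
      rintro ⟨hz1, -⟩
      have hzx : z.1 = x := by simpa using hz1
      exact hx hzx.symm
    · intro hz
      exact absurd (Finset.mem_univ _) hz
  have hFmeas : ∀ u, AEStronglyMeasurable (F u) ν := by
    intro u
    rw [hFdecomp u]
    refine Finset.aestronglyMeasurable_fun_sum _ fun x _ => AEStronglyMeasurable.indicator ?_
      ((hXm {x}).prod MeasurableSet.univ)
    exact (Lp.aestronglyMeasurable (u x)).comp_quasiMeasurePreserving hsndq
  -- p-th power lintegral of a single Lp function
  have hsn : ∀ f : Y → ℝ, (∫⁻ y, ‖f y‖ₑ ^ p.toReal ∂μ) = (eLpNorm f p μ) ^ p.toReal := by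
    intro f
    rw [eLpNorm_eq_lintegral_rpow_enorm_toReal hp0 hptop, ← ENNReal.rpow_mul, one_div,
      inv_mul_cancel₀ hpt.ne', ENNReal.rpow_one]
  have hFint : ∀ u, ∫⁻ z, ‖F u z‖ₑ ^ p.toReal ∂ν
      = ∑ x : X, (eLpNorm ((u x : Y → ℝ)) p μ) ^ p.toReal := by
    intro u
    rw [hνdef, MeasureTheory.lintegral_prod _ ((hFmeas u).enorm.pow_const _),
      MeasureTheory.lintegral_count, tsum_fintype]
    exact Finset.sum_congr rfl fun x _ => hsn _
  have hFmem : ∀ u, MemLp (F u) p ν := by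
    intro u
    refine ⟨hFmeas u, ?_⟩
    rw [eLpNorm_eq_lintegral_rpow_enorm_toReal hp0 hptop, hFint]
    refine ENNReal.rpow_lt_top_of_nonneg (by positivity) ?_
    exact (ENNReal.sum_lt_top.mpr fun x _ =>
      (ENNReal.rpow_lt_top_of_nonneg hpt.le (Lp.eLpNorm_lt_top (u x)).ne)).ne
  have hFnorm : ∀ u, eLpNorm (F u) p ν
      = (∑ x : X, (eLpNorm ((u x : Y → ℝ)) p μ) ^ p.toReal) ^ (1 / p.toReal) := by
    intro u
    rw [eLpNorm_eq_lintegral_rpow_enorm_toReal hp0 hptop, hFint]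
  -- the linear isometry
  set Ψ₀ : (PiLp p (fun _ : X => Lp ℝ p μ)) →ₗᵢ[ℝ] Lp ℝ p ν :=
    { toFun := fun u => (hFmem u).toLp (F u)
      map_add' := by
        intro u v
        rw [← MemLp.toLp_add (hFmem u) (hFmem v)]
        refine (MemLp.toLp_eq_toLp_iff _ _).mpr ?_
        apply hglue (fun z => F (u + v) z = (F u + F v) z)
        intro x
        filter_upwards [Lp.coeFn_add (u x) (v x)] with y hy
        simpa [hFdef] using hy
      map_smul' := by
        intro c u
        show (hFmem (c • u)).toLp (F (c • u)) = (RingHom.id ℝ) c • (hFmem u).toLp (F u)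
        rw [RingHom.id_apply, ← MemLp.toLp_const_smul c (hFmem u)]
        refine (MemLp.toLp_eq_toLp_iff _ _).mpr ?_
        apply hglue (fun z => F (c • u) z = (c • F u) z)
        intro x
        filter_upwards [Lp.coeFn_smul c (u x)] with y hy
        simpa [hFdef] using hy
      norm_map' := by
        intro u
        show ‖(hFmem u).toLp (F u)‖ = ‖u‖
        rw [Lp.norm_toLp _ (hFmem u), hFnorm u, PiLp.norm_eq_sum hpt]
        rw [← ENNReal.toReal_rpow]
        congr 1
        rw [ENNReal.toReal_sum (fun x _ =>
          (ENNReal.rpow_lt_top_of_nonneg hpt.le (Lp.eLpNorm_lt_top (u x)).ne).ne)]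
        exact Finset.sum_congr rfl fun x _ => by
          rw [Lp.norm_def, ENNReal.toReal_rpow] } with hΨ₀def
  -- surjectivity
  haveI : CompleteSpace (PiLp p (fun _ : X => Lp ℝ p μ)) :=
    inferInstance
  have hclosed : IsClosed (Set.range Ψ₀) :=
    (Ψ₀.isometry.isClosedEmbedding).isClosed_range
  have hsurj : Function.Surjective Ψ₀ := by
    intro f
    induction f using Lp.induction hptop with
    | @indicatorConst c s hs hμs =>
      have hslice : ∀ x : X, μ (Prod.mk x ⁻¹' s) ≠ ⊤ := by
        intro x
        have hle : μ (Prod.mk x ⁻¹' s) ≤ ν s := by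
          rw [hνdef, Measure.prod_apply hs, MeasureTheory.lintegral_count, tsum_fintype]
          exact Finset.single_le_sum (f := fun x => μ (Prod.mk x ⁻¹' s))
            (fun _ _ => zero_le) (Finset.mem_univ x)
        exact (hle.trans_lt hμs).ne
      set u : PiLp p (fun _ : X => Lp ℝ p μ) :=
        WithLp.toLp p (fun x => indicatorConstLp p (measurable_prodMk_left hs) (hslice x) c) with hudef
      refine ⟨u, ?_⟩
      rw [Lp.simpleFunc.coe_indicatorConst]
      show (hFmem u).toLp (F u) = indicatorConstLp p hs hμs.ne c
      have hae : ∀ᵐ z ∂ν, F u z = s.indicator (fun _ => c) z := by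
        apply hglue
        intro x
        filter_upwards [indicatorConstLp_coeFn
          (p := p) (hs := measurable_prodMk_left hs) (hμs := hslice x) (c := c)] with y hy
        have h1 : F u (x, y) = (Prod.mk x ⁻¹' s).indicator (fun _ => c) y := hy
        rw [h1]
        by_cases hmem : (x, y) ∈ s
        · rw [Set.indicator_of_mem hmem, Set.indicator_of_mem (by exact hmem)]
        · rw [Set.indicator_of_notMem hmem, Set.indicator_of_notMem (by exact hmem)]
      apply Lp.ext
      filter_upwards [MemLp.coeFn_toLp (hFmem u),
        indicatorConstLp_coeFn (p := p) (hs := hs) (hμs := hμs.ne) (c := c), hae]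
        with z h1 h2 h3
      rw [h1, h3, h2]
    | @add f g hf hg hfg hPf hPg =>
      obtain ⟨u, hu⟩ := hPf
      obtain ⟨v, hv⟩ := hPg
      exact ⟨u + v, by rw [map_add, hu, hv]⟩
    | isClosed =>
      exact hclosed
  exact ⟨LinearIsometryEquiv.ofSurjective Ψ₀ hsurj⟩

theorem aux_induct (p : ℝ≥0∞) (hp1 : 1 < p) (hp2 : p < ⊤)
    (L : Type) [Group L] (D₁ : Subgroup L) (hfin : Finite (L ⧸ D₁))
    (A : Set L) (h : BddLpCocyclesOn p hp1.le L A)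
    (B : Set ↥D₁) (hBA : ∀ x : ↥D₁, x ∈ B → (x : L) ∈ A) :
    BddLpCocyclesOn p hp1.le ↥D₁ B := by
  classical
  haveI : Fact (1 ≤ p) := ⟨hp1.le⟩
  have hp0 : p ≠ 0 := (one_pos.trans_le hp1.le).ne'
  have hpt : 0 < p.toReal := ENNReal.toReal_pos hp0 hp2.ne
  intro Y _ _ μ _ π b hb
  set X := L ⧸ D₁ with hXdef
  haveI : Finite X := hfin
  haveI : Fintype X := Fintype.ofFinite X
  letI : MeasurableSpace X := ⊤
  haveI : MeasurableSingletonClass X := ⟨fun _ => MeasurableSpace.measurableSet_top⟩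
  haveI : Countable X := Finite.to_countable
  -- the section of the quotient map
  set x₀ : X := QuotientGroup.mk 1 with hx₀def
  set sec : X → L := fun x => if x = x₀ then 1 else Quotient.out x with hsecdef
  have hsec : ∀ x, QuotientGroup.mk (sec x) = x := by
    intro x
    by_cases hx : x = x₀
    · simp [hsecdef, hx, hx₀def]
    · simp only [hsecdef, hx, if_false]
      exact QuotientGroup.out_eq' x
  have hsec₀ : sec x₀ = 1 := by simp [hsecdef]
  -- the transfer cocycle α
  have hmem : ∀ (g : L) (x : X), (sec (g • x))⁻¹ * (g * sec x) ∈ D₁ := by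
    intro g x
    have heq : (QuotientGroup.mk (sec (g • x)) : X) = QuotientGroup.mk (g * sec x) := by
      rw [hsec]
      have h2 : (QuotientGroup.mk (g * sec x) : X) = g • QuotientGroup.mk (sec x) := rfl
      rw [h2, hsec]
    exact QuotientGroup.eq.mp heq
  set α : L → X → ↥D₁ := fun g x => ⟨(sec (g • x))⁻¹ * (g * sec x), hmem g x⟩ with hαdef
  have hαcoc : ∀ (g k : L) (x : X), α (g * k) x = α g (k • x) * α k x := by
    intro g k x
    apply Subtype.ext
    show (sec ((g * k) • x))⁻¹ * (g * k * sec x)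
        = ((sec (g • (k • x)))⁻¹ * (g * sec (k • x))) * ((sec (k • x))⁻¹ * (k * sec x))
    rw [mul_smul]
    group
  have hsmul : ∀ (g k : L) (x : X), (g * k)⁻¹ • x = k⁻¹ • g⁻¹ • x := by
    intro g k x
    rw [mul_inv_rev, mul_smul]
  have hαmul : ∀ (g k : L) (x : X),
      α (g * k) ((g * k)⁻¹ • x) = α g (g⁻¹ • x) * α k ((g * k)⁻¹ • x) := by
    intro g k x
    have h1 := hαcoc g k ((g * k)⁻¹ • x)
    have h2 : k • (g * k)⁻¹ • x = g⁻¹ • x := by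
      rw [hsmul, smul_smul, mul_inv_cancel, one_smul]
    rwa [h2] at h1
  -- the induced objects
  obtain ⟨Ψ⟩ := aux_pi_iso p hp2.ne X Y μ
  set V := PiLp p (fun _ : X => Lp ℝ p μ) with hVdef
  set πhat : L → (V ≃ₗᵢ[ℝ] V) := fun g =>
    (LinearIsometryEquiv.piLpCongrRight p (fun x => π (α g x))).trans
      (LinearIsometryEquiv.piLpCongrLeft p ℝ (Lp ℝ p μ) (MulAction.toPerm g)) with hπhatdef
  have hπhatapply : ∀ (g : L) (v : V) (x : X),
      (πhat g v) x = π (α g (g⁻¹ • x)) (v (g⁻¹ • x)) := fun g v x => rfl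
  set T : L → (Lp ℝ p ((Measure.count : Measure X).prod μ) ≃ₗᵢ[ℝ]
      Lp ℝ p ((Measure.count : Measure X).prod μ)) :=
    fun g => (Ψ.symm.trans (πhat g)).trans Ψ with hTdef
  have hTmul : ∀ g k, T (g * k) = T g * T k := by
    intro g k
    apply LinearIsometryEquiv.ext
    intro f
    show Ψ (πhat (g * k) (Ψ.symm f)) = Ψ (πhat g (Ψ.symm (Ψ (πhat k (Ψ.symm f)))))
    rw [LinearIsometryEquiv.symm_apply_apply]
    congr 1
    refine PiLp.ext fun x => ?_
    rw [hπhatapply, hπhatapply, hπhatapply, hαmul g k x, map_mul]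
    have h2 : k⁻¹ • g⁻¹ • x = (g * k)⁻¹ • x := (hsmul g k x).symm
    rw [h2]
    rfl
  set Tmon : L →* (Lp ℝ p ((Measure.count : Measure X).prod μ) ≃ₗᵢ[ℝ]
      Lp ℝ p ((Measure.count : Measure X).prod μ)) := MonoidHom.mk' T hTmul with hTmondef
  set bhat : L → V := fun g => WithLp.toLp p (fun x => b (α g (g⁻¹ • x)) : ∀ _ : X, Lp ℝ p μ) with hbhatdef
  set btil : L → Lp ℝ p ((Measure.count : Measure X).prod μ) := fun g => Ψ (bhat g) with hbtildef
  have hcoc : ∀ g k, btil (g * k) = btil g + (Tmon g) (btil k) := by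
    intro g k
    show Ψ (bhat (g * k)) = Ψ (bhat g) + Ψ (πhat g (Ψ.symm (Ψ (bhat k))))
    rw [LinearIsometryEquiv.symm_apply_apply, ← map_add]
    congr 1
    refine PiLp.ext fun x => ?_
    show b (α (g * k) ((g * k)⁻¹ • x)) = b (α g (g⁻¹ • x)) + (πhat g (bhat k)) x
    rw [hπhatapply, hαmul g k x, hb]
    congr 2
    rw [hsmul g k x]
  obtain ⟨C, hC⟩ := h (X × Y) ((Measure.count : Measure X).prod μ) Tmon btil hcoc
  refine ⟨C, ?_⟩
  intro d hdB
  have hgA : (d : L) ∈ A := hBA d hdB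
  have hbound := hC (d : L) hgA
  -- identify the x₀ component of bhat d
  have hfix : ∀ g : L, g ∈ D₁ → g • x₀ = x₀ := by
    intro g hg
    show g • (QuotientGroup.mk 1 : X) = QuotientGroup.mk 1
    have h1 : g • (QuotientGroup.mk 1 : X) = QuotientGroup.mk (g * 1) := rfl
    rw [h1]
    apply QuotientGroup.eq.mpr
    simpa using inv_mem hg
  have hαd : α (d : L) ((d : L)⁻¹ • x₀) = d := by
    have hfix1 : (d : L)⁻¹ • x₀ = x₀ := hfix _ (inv_mem d.2)
    apply Subtype.ext
    show (sec ((d : L) • ((d : L)⁻¹ • x₀)))⁻¹ * ((d : L) * sec ((d : L)⁻¹ • x₀)) = (d : L)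
    rw [hfix1, hfix _ d.2, hsec₀]
    group
  have hcomp : ∀ (v : V) (x : X), ‖v x‖ ≤ ‖v‖ := by
    intro v x
    rw [PiLp.norm_eq_sum hpt]
    have h1 : ‖v x‖ = (‖v x‖ ^ p.toReal) ^ (1 / p.toReal) := by
      rw [← Real.rpow_mul (norm_nonneg _), mul_one_div, div_self hpt.ne', Real.rpow_one]
    rw [h1]
    apply Real.rpow_le_rpow (by positivity)
      (Finset.single_le_sum (f := fun i => ‖v i‖ ^ p.toReal) (fun i _ => by positivity)
        (Finset.mem_univ x)) (by positivity)
  have h1 : ‖b d‖ ≤ ‖bhat (d : L)‖ := by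
    have h2 : (bhat (d : L)) x₀ = b d := by
      show b (α (d : L) ((d : L)⁻¹ • x₀)) = b d
      rw [hαd]
    calc ‖b d‖ = ‖(bhat (d : L)) x₀‖ := by rw [h2]
      _ ≤ ‖bhat (d : L)‖ := hcomp _ _
  calc ‖b d‖ ≤ ‖bhat (d : L)‖ := h1
    _ = ‖btil (d : L)‖ := (Ψ.norm_map _).symm
    _ ≤ C := hbound

/-- For a regular symmetric uniform model set `Λ` of almost connected
type and a symmetric relatively dense subset `Δ ⊆ Λ` containing `1`: if every
`L^p`-cocycle on `Λ^∞` is bounded on `Λ`, then every `L^p`-cocycle on `Δ^∞` is bounded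
on `Δ`. -/
theorem meyer_FLp_of_modelSet_FLp
    (p : ℝ≥0∞) (hp1 : 1 < p) (hp2 : p < ⊤)
    (G : Type) [Group G] [TopologicalSpace G] [IsTopologicalGroup G] [T2Space G]
    [LocallyCompactSpace G] [SecondCountableTopology G]
    (H : Type) [Group H] [TopologicalSpace H] [IsTopologicalGroup H] [T2Space H]
    [LocallyCompactSpace H] [SecondCountableTopology H] [MeasurableSpace H] [BorelSpace H]
    (hH : CompactSpace (ConnectedComponents H))
    (Γ : Subgroup (G × H)) (hCP : IsCutAndProject Γ)
    (W : Set H) (hW : IsRegularWindow H Γ W)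
    (Δ : Set G) (hΔsub : Δ ⊆ modelSet Γ W) (hΔsym : Δ⁻¹ = Δ) (hΔ1 : (1 : G) ∈ Δ)
    (hΔrd : RelativelyDense Δ)
    (h : BddLpCocyclesOn p hp1.le ↥(Subgroup.closure (modelSet Γ W))
      {x : ↥(Subgroup.closure (modelSet Γ W)) | (x : G) ∈ modelSet Γ W}) :
    BddLpCocyclesOn p hp1.le ↥(Subgroup.closure Δ)
      {x : ↥(Subgroup.closure Δ) | (x : G) ∈ Δ} := by
    classical
  haveI hdisc : DiscreteTopology Γ := hCP.lattice.1
  have hΔgr : ∀ δ ∈ Δ, ∃ γ ∈ Γ, (γ : G × H).1 = δ ∧ (γ : G × H).2 ∈ W := by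
    intro δ hδ
    obtain ⟨γ, ⟨hγΓ, -, hγW⟩, hγ1⟩ := hΔsub hδ
    exact ⟨γ, hγΓ, hγ1, hγW⟩
  have hΛgr : ∀ l ∈ modelSet Γ W, ∃ γ ∈ Γ, (γ : G × H).1 = l := by
    intro l hl
    obtain ⟨γ, ⟨hγΓ, -⟩, hγ1⟩ := hl
    exact ⟨γ, hγΓ, hγ1⟩
  obtain ⟨K, hK, hΔK⟩ := hΔrd
  obtain ⟨T, hTfin, hT⟩ := aux_transversal hH Γ hCP.dense_proj W hW.1 Δ (modelSet Γ W)
    hΔgr hΛgr hΔsub K hK hΔK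
  set LG : Subgroup G := Subgroup.closure (modelSet Γ W) with hLGdef
  set DG : Subgroup G := Subgroup.closure Δ with hDGdef
  have hle : DG ≤ LG := Subgroup.closure_mono hΔsub
  have hfin : Finite (↥LG ⧸ (DG.subgroupOf LG)) := by
    have hT'fin : (Subtype.val ⁻¹' T : Set ↥LG).Finite :=
      hTfin.preimage (Set.injOn_of_injective Subtype.val_injective)
    haveI : Finite ↥(Subtype.val ⁻¹' T : Set ↥LG) := hT'fin
    apply Finite.of_surjective (f := fun t : ↥(Subtype.val ⁻¹' T : Set ↥LG) =>
      (QuotientGroup.mk (t : ↥LG) : ↥LG ⧸ DG.subgroupOf LG))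
    intro q
    obtain ⟨l, rfl⟩ := QuotientGroup.mk_surjective q
    obtain ⟨t, htT, htLG, htd⟩ := hT (l : G) l.2
    refine ⟨⟨⟨t, htLG⟩, htT⟩, ?_⟩
    apply QuotientGroup.eq.mpr
    rw [Subgroup.mem_subgroupOf]
    exact htd
  have hmain := aux_induct p hp1 hp2 ↥LG (DG.subgroupOf LG) hfin
    {x : ↥LG | (x : G) ∈ modelSet Γ W} h
    {x : ↥(DG.subgroupOf LG) | ((x : ↥LG) : G) ∈ Δ}
    (fun x hx => hΔsub hx)
  intro Y _ _ μ _ π b hb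
  haveI : Fact (1 ≤ p) := ⟨hp1.le⟩
  set e : ↥(DG.subgroupOf LG) ≃* ↥DG := Subgroup.subgroupOfEquivOfLe hle with hedef
  obtain ⟨C, hC⟩ := hmain Y μ (π.comp e.toMonoidHom) (fun x => b (e x)) (by
    intro g k
    show b (e (g * k)) = b (e g) + (π (e g)) (b (e k))
    rw [map_mul]
    exact hb (e g) (e k))
  refine ⟨C, ?_⟩
  intro x hx
  have hco : ∀ z : ↥(DG.subgroupOf LG), ((e z : ↥DG) : G) = ((z : ↥LG) : G) := fun z => rfl
  have hmem : e.symm x ∈ {z : ↥(DG.subgroupOf LG) | ((z : ↥LG) : G) ∈ Δ} := by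
    show (((e.symm x) : ↥LG) : G) ∈ Δ
    rw [← hco (e.symm x), e.apply_symm_apply]
    exact hx
  have hfinal := hC (e.symm x) hmem
  simpa [e.apply_symm_apply] using hfinal
end
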